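/- Let Γ be a countably infinite group and let Ω₀, Ω₁, … ⊆ ℕ^Γ be a countable sequence of hard subshifts. If Ω := ⋃ᵢ Ωᵢ is a subshift (i.e., is closed), then Ω is also hard. -/

import Mathlib

open Set Function Topology

namespace DescColor

/-- A set is *Baire measurable* if it differs from an open set by a meager set. -/
def BaireMSet {X : Type*} [TopologicalSpace X] (S : Set X) : Prop :=
  ∃ U : Set X, IsOpen U ∧ IsMeagre (symmDiff S U)

/-- A function is *Baire measurable* if preimages of measurable (Borel) sets are
Baire measurable. -/
def BaireMFun {X Y : Type*} [TopologicalSpace X] [MeasurableSpace Y] (f : X → Y) : Prop :=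
  ∀ B : Set Y, MeasurableSet B → BaireMSet (f ⁻¹' B)

variable {Γ : Type*}

/-- The shift action of `Γ` on colorings `Γ → ℕ`: `(γ · ω)(δ) = ω (δ γ)`. -/
def shift [Group Γ] (γ : Γ) (ω : Γ → ℕ) : Γ → ℕ := fun δ => ω (δ * γ)

/-- A subshift: a closed shift-invariant set of colorings. -/
def IsSubshift [Group Γ] (Ω : Set (Γ → ℕ)) : Prop :=
  IsClosed Ω ∧ ∀ (γ : Γ), ∀ ω ∈ Ω, shift γ ω ∈ Ω

/-- The coding map `π_f(x)(γ) = f (γ • x)`. -/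
def codingMap [Group Γ] {X : Type*} [MulAction Γ X] (f : X → ℕ) (x : X) : Γ → ℕ :=
  fun γ => f (γ • x)

/-- The action of `Γ` on `X` admits a Baire measurable `Ω`-coloring. -/
def HasBMColoring [Group Γ] (X : Type*) [TopologicalSpace X] [MulAction Γ X]
    (Ω : Set (Γ → ℕ)) : Prop :=
  ∃ f : X → ℕ, BaireMFun f ∧ {x : X | codingMap f x ∈ Ω} ∈ residual X

/-- The action of `Γ` on `X` is generically smooth. -/
def GenSmooth (Γ : Type*) [Group Γ] (X : Type*) [TopologicalSpace X] [MulAction Γ X] : Prop :=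
  ∃ f : X → ℝ, BaireMFun f ∧ ∀ x y : X, f x = f y ↔ ∃ γ : Γ, γ • x = y

/-- The shift action of `Γ` on `ℕ^Γ` admits a Baire measurable `Ω`-coloring. -/
def ShiftHasBMColoring (Γ : Type*) [Group Γ] (Ω : Set (Γ → ℕ)) : Prop :=
  ∃ f : (Γ → ℕ) → ℕ, BaireMFun f ∧
    {ω : Γ → ℕ | (fun γ : Γ => f (shift γ ω)) ∈ Ω} ∈ residual (Γ → ℕ)

/-- A free continuous action of `Γ` on a Polish space. -/
structure FreePolishAction (Γ : Type*) [Group Γ] where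
  X : Type
  ts : TopologicalSpace X
  polish : @PolishSpace X ts
  smul : Γ → X → X
  one_smul' : ∀ x, smul 1 x = x
  mul_smul' : ∀ γ δ x, smul (γ * δ) x = smul γ (smul δ x)
  cont : ∀ γ : Γ, @Continuous X X ts ts (smul γ)
  free : ∀ (γ : Γ) (x : X), smul γ x = x → γ = 1

/-- A free continuous action on a Polish space admits a Baire measurable `Ω`-coloring. -/
def FreePolishAction.HasBMCol [Group Γ] (α : FreePolishAction Γ) (Ω : Set (Γ → ℕ)) : Prop :=
  letI := α.ts
  ∃ f : α.X → ℕ, BaireMFun f ∧ {x : α.X | (fun γ : Γ => f (α.smul γ x)) ∈ Ω} ∈ residual α.X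

/-- A free continuous action on a Polish space is generically smooth. -/
def FreePolishAction.IsGenSmooth [Group Γ] (α : FreePolishAction Γ) : Prop :=
  letI := α.ts
  ∃ f : α.X → ℝ, BaireMFun f ∧ ∀ x y : α.X, f x = f y ↔ ∃ γ : Γ, α.smul γ x = y

/-- A subshift is *hard* if every free continuous action of `Γ` on a Polish space that
admits a Baire measurable `Ω`-coloring is generically smooth. -/
def Hard (Γ : Type*) [Group Γ] (Ω : Set (Γ → ℕ)) : Prop :=
  ∀ α : FreePolishAction Γ, α.HasBMCol Ω → α.IsGenSmooth

/-- A subshift is *easy* if every free continuous action of `Γ` on a Polish space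
admits a Baire measurable `Ω`-coloring. -/
def Easy (Γ : Type*) [Group Γ] (Ω : Set (Γ → ℕ)) : Prop :=
  ∀ α : FreePolishAction Γ, α.HasBMCol Ω

/-- Finite partial colorings of `Γ`: partial maps `Γ ⇀ ℕ` with finite domain. -/
abbrev FPC (Γ : Type*) : Type _ := {φ : Γ → Option ℕ // {γ : Γ | φ γ ≠ none}.Finite}

/-- The domain of a finite partial coloring. -/
def domP (φ : FPC Γ) : Set Γ := {γ : Γ | φ.1 γ ≠ none}

/-- `Fin(Ω)`: the set of finite partial colorings extending to an element of `Ω`. -/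
def FinOf (Ω : Set (Γ → ℕ)) : Set (FPC Γ) :=
  {φ | ∃ ω ∈ Ω, ∀ (γ : Γ) (c : ℕ), φ.1 γ = some c → ω γ = c}

/-- `g : FPC Γ → Bool` codes (the set `Fin(Ω)` of) the subshift `Ω`. -/
def CodesSubshift [Group Γ] (g : FPC Γ → Bool) (Ω : Set (Γ → ℕ)) : Prop :=
  IsSubshift Ω ∧ ∀ φ : FPC Γ, g φ = true ↔ φ ∈ FinOf Ω

/-- The shift action of `Γ` on finite partial colorings: `(γ · φ)(δ) = φ(δγ)`. -/
def shiftP [Group Γ] (γ : Γ) (φ : FPC Γ) : FPC Γ :=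
  ⟨fun δ => φ.1 (δ * γ), by
    apply (φ.2.image fun δ => δ * γ⁻¹).subset
    intro δ hδ
    exact ⟨δ * γ, hδ, by simp⟩⟩

/-- The empty partial coloring. -/
def emptyP (Γ : Type*) : FPC Γ := ⟨fun _ => none, by simp⟩

/-- The union (join) of two partial colorings (values of `φ` take precedence). -/
def joinP (φ ψ : FPC Γ) : FPC Γ :=
  ⟨fun δ => match φ.1 δ with | some c => some c | none => ψ.1 δ, by
    apply (φ.2.union ψ.2).subset
    intro δ hδ
    by_cases h : φ.1 δ = none
    · right
      simp only [mem_setOf_eq, h] at hδ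
      exact hδ
    · exact Or.inl h⟩

/-- The union of a finite list of partial colorings. -/
def joinList (l : List (FPC Γ)) : FPC Γ := l.foldr joinP (emptyP Γ)

/-- `φ[γ, r]`: the restriction of `φ` to the closed ball `B(γ, r)`. -/
noncomputable def restrictBall [MetricSpace Γ] (φ : FPC Γ) (γ : Γ) (r : ℝ) : FPC Γ :=
  ⟨fun δ => if dist γ δ ≤ r then φ.1 δ else none, by
    apply φ.2.subset
    intro δ hδ
    by_cases h : dist γ δ ≤ r
    · simp only [mem_setOf_eq, if_pos h] at hδ
      exact hδ
    · simp only [mem_setOf_eq, if_neg h] at hδ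
      exact absurd rfl hδ⟩

/-- `φ ∪ {(γ, c)}`. -/
def insertP [DecidableEq Γ] (φ : FPC Γ) (γ : Γ) (c : ℕ) : FPC Γ :=
  ⟨fun δ => if δ = γ then some c else φ.1 δ, by
    apply (φ.2.insert γ).subset
    intro δ hδ
    by_cases h : δ = γ
    · exact Or.inl h
    · right
      simp only [mem_setOf_eq, if_neg h] at hδ
      exact hδ⟩

/-- The restriction of a total coloring `ω` to a finite set `S`. -/
def restrictTo [DecidableEq Γ] (ω : Γ → ℕ) (S : Finset Γ) : FPC Γ :=
  ⟨fun δ => if δ ∈ S then some (ω δ) else none, by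
    apply S.finite_toSet.subset
    intro δ hδ
    by_cases h : δ ∈ S
    · exact h
    · simp only [mem_setOf_eq, if_neg h] at hδ
      exact absurd rfl hδ⟩

/-- Post-composition of a partial coloring with `ρ : ℕ → ℕ`. -/
def mapP (ρ : ℕ → ℕ) (φ : FPC Γ) : FPC Γ :=
  ⟨fun δ => (φ.1 δ).map ρ, by
    apply φ.2.subset
    intro δ hδ
    intro h
    simp only [mem_setOf_eq, h] at hδ
    exact hδ rfl⟩

/-- `ψ` is a restriction of `φ`. -/
def IsRestrictionOf (ψ φ : FPC Γ) : Prop := ∀ δ : Γ, ψ.1 δ = none ∨ ψ.1 δ = φ.1 δ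

/-- A `Γ`-ideal: a shift-invariant set of finite partial colorings closed under
restrictions. -/
def IsGammaIdeal [Group Γ] (P : Set (FPC Γ)) : Prop :=
  (∀ (γ : Γ), ∀ φ ∈ P, shiftP γ φ ∈ P) ∧
  (∀ φ ∈ P, ∀ ψ : FPC Γ, IsRestrictionOf ψ φ → ψ ∈ P)

/-- An extendable `Γ`-ideal. -/
def IsExtendable [DecidableEq Γ] (P : Set (FPC Γ)) : Prop :=
  ∀ φ ∈ P, ∀ γ : Γ, φ.1 γ = none → ∃ c : ℕ, insertP φ γ c ∈ P

/-- `φ` and `ψ` are `R`-separated: `dist(dom φ, dom ψ) > R φ + R ψ`. -/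
def RSeparated [MetricSpace Γ] (R : FPC Γ → ℝ) (φ ψ : FPC Γ) : Prop :=
  ∀ γ ∈ domP φ, ∀ δ ∈ domP ψ, R φ + R ψ < dist γ δ

/-- The join property of a `Γ`-ideal `P`. -/
def HasJoinProperty [Group Γ] [MetricSpace Γ] (P : Set (FPC Γ)) : Prop :=
  ∃ R : FPC Γ → ℝ, (∀ φ, 0 ≤ R φ) ∧ (∀ (γ : Γ), ∀ φ ∈ P, R (shiftP γ φ) = R φ) ∧
    ∀ l : List (FPC Γ), (∀ φ ∈ l, φ ∈ P) → l.Pairwise (RSeparated R) → joinList l ∈ P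

/-- `P^loc_r`: partial colorings that are `r`-locally in `P`. -/
def LocallyIn [MetricSpace Γ] (P : Set (FPC Γ)) (r : ℕ → ℝ) : Set (FPC Γ) :=
  {φ | ∀ (γ : Γ) (c : ℕ), φ.1 γ = some c → restrictBall φ γ (r c) ∈ P}

/-- A local `Γ`-ideal. -/
def IsLocal [MetricSpace Γ] (P : Set (FPC Γ)) : Prop :=
  ∃ r : ℕ → ℝ, (∀ c, 0 ≤ r c) ∧ P = LocallyIn P r

/-- `Col(P)`: colorings all of whose finite restrictions lie in `P`. -/
def ColOf [DecidableEq Γ] (P : Set (FPC Γ)) : Set (Γ → ℕ) :=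
  {ω | ∀ S : Finset Γ, restrictTo ω S ∈ P}

/-! ### The space of Baire measurable functions -/

/-- Baire measurable functions from `X` to `Y`. -/
abbrev BMFunSub (X Y : Type*) [TopologicalSpace X] [MeasurableSpace Y] :=
  {f : X → Y // BaireMFun f}

/-- Equality on a comeager set. -/
def BFunRel {X Y : Type*} [TopologicalSpace X] [MeasurableSpace Y]
    (f g : BMFunSub X Y) : Prop := {x : X | f.1 x = g.1 x} ∈ residual X

/-- `B(X,Y)`: Baire measurable functions modulo equality on a comeager set. -/
abbrev BFun (X Y : Type*) [TopologicalSpace X] [MeasurableSpace Y] :=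
  Quot (BFunRel (X := X) (Y := Y))

/-- `[U, A]`: the classes of functions `f` with `U ∖ f⁻¹(A)` meager. -/
def forceSet {X Y : Type*} [TopologicalSpace X] [MeasurableSpace Y]
    (U : Set X) (A : Set Y) : Set (BFun X Y) :=
  {F | ∃ f : BMFunSub X Y, Quot.mk BFunRel f = F ∧ IsMeagre (U \ f.1 ⁻¹' A)}

/-- `Σ(X,Y)`: the σ-algebra generated by the sets `[U, A]` for `U` nonempty open
and `A` Borel. -/
def SigmaXY (X Y : Type*) [TopologicalSpace X] [MeasurableSpace Y] :
    MeasurableSpace (BFun X Y) :=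
  MeasurableSpace.generateFrom
    {S | ∃ (U : Set X) (A : Set Y), IsOpen U ∧ U.Nonempty ∧ MeasurableSet A ∧ S = forceSet U A}

section AuxLemmas
open Filter

lemma isMeagre_symmDiff_iff {X : Type*} [TopologicalSpace X] {S U : Set X} :
    IsMeagre (symmDiff S U) ↔ S =ᵇ U := by
  have h : {x | x ∈ S ↔ x ∈ U} = (symmDiff S U)ᶜ := by
    ext x
    simp only [mem_compl_iff, mem_setOf_eq, Set.mem_symmDiff]
    tauto
  rw [Filter.eventuallyEq_set, Filter.eventually_iff, h, IsMeagre]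

lemma baireMSet_iff {X : Type*} [TopologicalSpace X] (S : Set X) :
    BaireMSet S ↔ BaireMeasurableSet S := by
  constructor
  · rintro ⟨U, hU, hm⟩
    exact hU.baireMeasurableSet.congr (isMeagre_symmDiff_iff.mp hm).symm
  · intro h
    rcases h.residualEq_isOpen with ⟨U, hU, he⟩
    exact ⟨U, hU, isMeagre_symmDiff_iff.mpr he⟩

lemma isMeagre_iUnion' {X ι : Type*} [TopologicalSpace X] [Countable ι] {s : ι → Set X}
    (hs : ∀ i, IsMeagre (s i)) : IsMeagre (⋃ i, s i) := by
  rw [IsMeagre, compl_iUnion]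
  exact countable_iInter_mem.mpr hs

lemma isMeagre_union {X : Type*} [TopologicalSpace X] {s t : Set X}
    (hs : IsMeagre s) (ht : IsMeagre t) : IsMeagre (s ∪ t) := by
  rw [IsMeagre, compl_union]
  exact Filter.inter_mem hs ht

lemma isNowhereDense_image_val {X : Type*} [TopologicalSpace X] {U : Set X} (hU : IsOpen U)
    {T : Set U} (hT : IsNowhereDense T) : IsNowhereDense (Subtype.val '' T : Set X) := by
  rw [IsNowhereDense, Set.eq_empty_iff_forall_notMem]
  intro x hx
  have hsubU : (Subtype.val '' T : Set X) ⊆ U := by rintro _ ⟨y, _, rfl⟩; exact y.2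
  have hxcl : x ∈ closure U := closure_mono hsubU (interior_subset hx)
  obtain ⟨z, hzC, hzU⟩ :=
    mem_closure_iff.mp hxcl (interior (closure (Subtype.val '' T : Set X))) isOpen_interior hx
  have hcl : closure T = (Subtype.val : U → X) ⁻¹' closure (Subtype.val '' T : Set X) :=
    Topology.IsEmbedding.subtypeVal.closure_eq_preimage_closure_image T
  have hsub2 : (Subtype.val : U → X) ⁻¹' (interior (closure (Subtype.val '' T : Set X))) ⊆
      interior (closure T) := by
    apply interior_maximal
    · rw [hcl]; exact preimage_mono interior_subset
    · exact isOpen_interior.preimage continuous_subtype_val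
  have : (⟨z, hzU⟩ : U) ∈ interior (closure T) := hsub2 hzC
  rw [hT] at this
  exact this

lemma isMeagre_image_val {X : Type*} [TopologicalSpace X] {U : Set X} (hU : IsOpen U)
    {A : Set U} (hA : IsMeagre A) : IsMeagre (Subtype.val '' A : Set X) := by
  rw [isMeagre_iff_countable_union_isNowhereDense] at hA ⊢
  obtain ⟨S, hS, hc, hsub⟩ := hA
  refine ⟨(fun T => (Subtype.val '' T : Set X)) '' S, ?_, hc.image _, ?_⟩
  · rintro _ ⟨T, hTS, rfl⟩
    exact isNowhereDense_image_val hU (hS T hTS)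
  · rintro _ ⟨a, ha, rfl⟩
    obtain ⟨T, hTS, haT⟩ := hsub ha
    exact ⟨Subtype.val '' T, ⟨T, hTS, rfl⟩, ⟨a, haT, rfl⟩⟩

lemma baireMeasurableSet_image_val {X : Type*} [TopologicalSpace X] {U : Set X} (hU : IsOpen U)
    {A : Set U} (hA : BaireMeasurableSet A) :
    BaireMeasurableSet (Subtype.val '' A : Set X) := by
  obtain ⟨O, hO, he⟩ := hA.residualEq_isOpen
  have hm : IsMeagre (symmDiff A O) := isMeagre_symmDiff_iff.mpr he
  have hm2 : IsMeagre (symmDiff (Subtype.val '' A : Set X) (Subtype.val '' O : Set X)) := by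
    rw [← Set.image_symmDiff Subtype.coe_injective]
    exact isMeagre_image_val hU hm
  exact ((hU.isOpenMap_subtype_val O hO).baireMeasurableSet).congr
    (isMeagre_symmDiff_iff.mp hm2).symm


end AuxLemmas

set_option maxHeartbeats 1000000 in
/-- A countable union of hard subshifts which is itself a subshift is hard. -/
theorem stmt8 {Γ : Type*} [Group Γ] [Countable Γ] [Infinite Γ]
    (Ω : ℕ → Set (Γ → ℕ)) (hsub : ∀ i, IsSubshift (Ω i)) (hhard : ∀ i, Hard Γ (Ω i))
    (hclosed : IsClosed (⋃ i, Ω i)) :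
    Hard Γ (⋃ i, Ω i) := by
  classical
  intro α hcol
  letI := α.ts
  haveI := α.polish
  obtain ⟨f, hf, hres⟩ := hcol
  -- basic action facts
  have hinv1 : ∀ (γ : Γ) (x : α.X), α.smul γ⁻¹ (α.smul γ x) = x := fun γ x => by
    rw [← α.mul_smul', inv_mul_cancel, α.one_smul']
  have hinv2 : ∀ (γ : Γ) (x : α.X), α.smul γ (α.smul γ⁻¹ x) = x := fun γ x => by
    rw [← α.mul_smul', mul_inv_cancel, α.one_smul']
  have hopen : ∀ γ : Γ, IsOpenMap (α.smul γ) := fun γ =>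
    (Homeomorph.mk ⟨α.smul γ, α.smul γ⁻¹, hinv1 γ, hinv2 γ⟩ (α.cont γ) (α.cont γ⁻¹)).isOpenMap
  -- the invariant pieces
  set Xs : ℕ → Set α.X := fun i => {x | (fun γ : Γ => f (α.smul γ x)) ∈ Ω i} with hXsdef
  have hfBM : ∀ B : Set ℕ, BaireMeasurableSet (f ⁻¹' B) := fun B =>
    (baireMSet_iff _).mp (hf B MeasurableSpace.measurableSet_top)
  have hπ : @Measurable _ _ (eventuallyMeasurableSpace (borel α.X) (residual α.X))
      MeasurableSpace.pi (fun x (γ : Γ) => f (α.smul γ x)) := by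
    letI : MeasurableSpace α.X := eventuallyMeasurableSpace (borel α.X) (residual α.X)
    refine measurable_pi_lambda _ fun γ => ?_
    intro B _
    exact (hfBM B).preimage (α.cont γ) (hopen γ)
  have hXsBM : ∀ i, BaireMeasurableSet (Xs i) := fun i => hπ ((hsub i).1.measurableSet)
  have hXinv : ∀ i (γ : Γ) (x : α.X), x ∈ Xs i → α.smul γ x ∈ Xs i := by
    intro i γ x hx
    have hsh : (fun δ : Γ => f (α.smul δ (α.smul γ x)))
        = shift γ (fun δ : Γ => f (α.smul δ x)) := by
      funext δ; simp only [shift, ← α.mul_smul']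
    show (fun δ : Γ => f (α.smul δ (α.smul γ x))) ∈ Ω i
    rw [hsh]
    exact (hsub i).2 γ _ hx
  -- invariant open hulls
  have hhull : ∀ i, ∃ U : Set α.X, IsOpen U ∧ IsMeagre (symmDiff (Xs i) U) := fun i => by
    obtain ⟨U, hU, he⟩ := (hXsBM i).residualEq_isOpen
    exact ⟨U, hU, isMeagre_symmDiff_iff.mpr he⟩
  choose U hUopen hUm using hhull
  set V : ℕ → Set α.X := fun i => ⋃ γ : Γ, (fun x => α.smul γ x) ⁻¹' (U i) with hVdef
  have hVmem : ∀ i (x : α.X), x ∈ V i ↔ ∃ γ : Γ, α.smul γ x ∈ U i := by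
    intro i x
    simp only [hVdef, mem_iUnion, mem_preimage]
  have hVopen : ∀ i, IsOpen (V i) := fun i =>
    isOpen_iUnion fun γ => (hUopen i).preimage (α.cont γ)
  have hVinvF : ∀ i (γ : Γ) (x : α.X), x ∈ V i → α.smul γ x ∈ V i := by
    intro i γ x hx
    obtain ⟨δ, hδ⟩ := (hVmem i x).mp hx
    refine (hVmem i _).mpr ⟨δ * γ⁻¹, ?_⟩
    rw [← α.mul_smul', mul_assoc, inv_mul_cancel, mul_one]
    exact hδ
  have hVinv : ∀ i (γ : Γ) (x : α.X), α.smul γ x ∈ V i ↔ x ∈ V i := by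
    intro i γ x
    refine ⟨fun h => ?_, hVinvF i γ x⟩
    have h2 := hVinvF i γ⁻¹ _ h
    rwa [hinv1] at h2
  have hVm : ∀ i, IsMeagre (symmDiff (Xs i) (V i)) := by
    intro i
    have hsub' : symmDiff (Xs i) (V i) ⊆
        ⋃ γ : Γ, (fun x => α.smul γ x) ⁻¹' (symmDiff (Xs i) (U i)) := by
      intro x hx
      rcases Set.mem_symmDiff.mp hx with ⟨hx1, hx2⟩ | ⟨hx1, hx2⟩
      · refine mem_iUnion.mpr ⟨1, ?_⟩
        show α.smul 1 x ∈ symmDiff (Xs i) (U i)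
        refine Set.mem_symmDiff.mpr (Or.inl ⟨hXinv i 1 x hx1, fun h => ?_⟩)
        exact hx2 ((hVmem i x).mpr ⟨1, h⟩)
      · obtain ⟨γ, hγ⟩ := (hVmem i x).mp hx1
        refine mem_iUnion.mpr ⟨γ, ?_⟩
        show α.smul γ x ∈ symmDiff (Xs i) (U i)
        refine Set.mem_symmDiff.mpr (Or.inr ⟨hγ, fun h => ?_⟩)
        have h2 := hXinv i γ⁻¹ _ h
        rw [hinv1] at h2
        exact hx2 h2
    exact ((isMeagre_iUnion' fun γ =>
      (hUm i).preimage_of_isOpenMap (α.cont γ) (hopen γ))).mono hsub'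
  -- leftover meager
  have hNm : IsMeagre {x : α.X | ¬ ∃ i, x ∈ V i} := by
    have hsub' : {x : α.X | ¬ ∃ i, x ∈ V i} ⊆
        {x : α.X | (fun γ : Γ => f (α.smul γ x)) ∈ ⋃ i, Ω i}ᶜ ∪
          ⋃ i, symmDiff (Xs i) (V i) := by
      intro x hx
      by_cases hc : (fun γ : Γ => f (α.smul γ x)) ∈ ⋃ i, Ω i
      · obtain ⟨i, hi⟩ := mem_iUnion.mp hc
        exact Or.inr (mem_iUnion.mpr ⟨i, Set.mem_symmDiff.mpr
          (Or.inl ⟨hi, fun h => hx ⟨i, h⟩⟩)⟩)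
      · exact Or.inl hc
    refine (isMeagre_union ?_ (isMeagre_iUnion' hVm)).mono hsub'
    rw [IsMeagre, compl_compl]
    exact hres
  -- subspace actions
  let β : ℕ → FreePolishAction Γ := fun i =>
    { X := {x : α.X // x ∈ V i}
      ts := inferInstance
      polish := (hVopen i).polishSpace
      smul := fun γ y => ⟨α.smul γ y.1, hVinvF i γ y.1 y.2⟩
      one_smul' := fun y => Subtype.ext (α.one_smul' y.1)
      mul_smul' := fun γ δ y => Subtype.ext (α.mul_smul' γ δ y.1)
      cont := fun γ => Continuous.subtype_mk ((α.cont γ).comp continuous_subtype_val) _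
      free := fun γ y h => α.free γ y.1 (congrArg Subtype.val h) }
  have hgex : ∀ i, ∃ g : {x : α.X // x ∈ V i} → ℝ, BaireMFun g ∧
      ∀ x y : {x : α.X // x ∈ V i}, g x = g y ↔ ∃ γ : Γ, (β i).smul γ x = y := by
    intro i
    have hcol' : (β i).HasBMCol (Ω i) := by
      refine ⟨fun y => f y.1, fun B hB => ?_, ?_⟩
      · exact (baireMSet_iff _).mpr (((baireMSet_iff _).mp (hf B hB)).preimage
          continuous_subtype_val (hVopen i).isOpenMap_subtype_val)
      · have hmeag : IsMeagre ({y : {x : α.X // x ∈ V i} |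
            (fun γ : Γ => f (α.smul γ y.1)) ∈ Ω i}ᶜ) := by
          have hpre := (hVm i).preimage_of_isOpenMap continuous_subtype_val
            (hVopen i).isOpenMap_subtype_val
          refine hpre.mono ?_
          intro y hy
          show y.1 ∈ symmDiff (Xs i) (V i)
          exact Set.mem_symmDiff.mpr (Or.inr ⟨y.2, hy⟩)
        rwa [IsMeagre, compl_compl] at hmeag
    exact hhard i (β i) hcol'
  choose g hgBM hgspec using hgex
  -- orbit representative for the leftover part
  let sd : Setoid α.X := ⟨fun x y => ∃ γ : Γ, α.smul γ x = y,
    ⟨fun x => ⟨1, α.one_smul' x⟩,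
     fun h => match h with | ⟨γ, hh⟩ => ⟨γ⁻¹, by rw [← hh, hinv1]⟩,
     fun h h' => match h, h' with
       | ⟨γ, hh⟩, ⟨δ, hh'⟩ => ⟨δ * γ, by rw [α.mul_smul', hh, hh']⟩⟩⟩
  let rep : α.X → α.X := fun x => (Quotient.mk sd x).out
  have hrep : ∀ x y : α.X, rep x = rep y ↔ ∃ γ : Γ, α.smul γ x = y := by
    intro x y
    constructor
    · intro h
      have h2 : Quotient.mk sd x = Quotient.mk sd y := by
        conv_lhs => rw [← Quotient.out_eq (Quotient.mk sd x)]
        conv_rhs => rw [← Quotient.out_eq (Quotient.mk sd y)]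
        exact congrArg (Quotient.mk sd) h
      exact Quotient.exact h2
    · intro h
      exact congrArg Quotient.out (Quotient.sound h)
  obtain ⟨emb, hembinj⟩ : ∃ emb : α.X → ℝ, Function.Injective emb := by
    borelize α.X
    obtain ⟨e, he⟩ := MeasureTheory.exists_measurableEmbedding_real α.X
    exact ⟨e, he.injective⟩
  -- the proof-irrelevant version of the g's
  let G : ℕ → α.X → ℝ := fun i x => if h : x ∈ V i then g i ⟨x, h⟩ else 0
  have hGval : ∀ i (x : α.X) (h : x ∈ V i), G i x = g i ⟨x, h⟩ := fun i x h => dif_pos h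
  -- the gluing function
  set F : α.X → ℝ := fun x =>
    if h : ∃ i, x ∈ V i then
      2 * Real.pi * (Nat.find h) + Real.arctan (G (Nat.find h) x)
    else -Real.pi + Real.arctan (emb (rep x)) with hFdef
  have hFval : ∀ (x : α.X) (h : ∃ i, x ∈ V i),
      F x = 2 * Real.pi * (Nat.find h) + Real.arctan (G (Nat.find h) x) := by
    intro x h
    simp only [hFdef]
    rw [dif_pos h]
  have hFvaln : ∀ (x : α.X) (h : ¬ ∃ i, x ∈ V i),
      F x = -Real.pi + Real.arctan (emb (rep x)) := by
    intro x h
    simp only [hFdef]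
    rw [dif_neg h]
  -- arithmetic lemmas
  have hpi : (0:ℝ) < Real.pi := Real.pi_pos
  have harc : ∀ r : ℝ, |Real.arctan r| < Real.pi / 2 := fun r =>
    abs_lt.mpr ⟨Real.neg_pi_div_two_lt_arctan r, Real.arctan_lt_pi_div_two r⟩
  have hkey : ∀ (i j : ℕ) (a b : ℝ), i < j →
      2 * Real.pi * i + Real.arctan a ≠ 2 * Real.pi * j + Real.arctan b := by
    intro i j a b hij h
    have hcast : (i:ℝ) + 1 ≤ (j:ℝ) := by exact_mod_cast hij
    have h1 := abs_lt.mp (harc a)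
    have h2 := abs_lt.mp (harc b)
    nlinarith [h1.1, h1.2, h2.1, h2.2, hpi, hcast]
  have hvaleq : ∀ (i j : ℕ) (a b : ℝ),
      2 * Real.pi * i + Real.arctan a = 2 * Real.pi * j + Real.arctan b → i = j ∧ a = b := by
    intro i j a b h
    have hij : i = j := by
      rcases lt_trichotomy i j with hlt | heq | hgt
      · exact absurd h (hkey i j a b hlt)
      · exact heq
      · exact absurd h.symm (hkey j i b a hgt)
    subst hij
    have harct : Real.arctan a = Real.arctan b := by linarith
    exact ⟨rfl, Real.arctan_injective harct⟩
  have hvalne : ∀ (i : ℕ) (a b : ℝ),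
      2 * Real.pi * i + Real.arctan a ≠ -Real.pi + Real.arctan b := by
    intro i a b h
    have h1 := abs_lt.mp (harc a)
    have h2 := abs_lt.mp (harc b)
    have h3 : (0:ℝ) ≤ 2 * Real.pi * i := by positivity
    linarith [h1.1, h1.2, h2.1, h2.2]
  have hfind : ∀ (γ : Γ) (x : α.X) (h : ∃ i, x ∈ V i) (h' : ∃ i, α.smul γ x ∈ V i),
      Nat.find h = Nat.find h' := by
    intro γ x h h'
    apply le_antisymm
    · exact Nat.find_min' h ((hVinv _ γ x).mp (Nat.find_spec h'))
    · exact Nat.find_min' h' (hVinvF _ γ x (Nat.find_spec h))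
  -- the biconditional
  have hFiff : ∀ x y : α.X, F x = F y ↔ ∃ γ : Γ, α.smul γ x = y := by
    intro x y
    constructor
    · intro hxy
      by_cases hx : ∃ i, x ∈ V i <;> by_cases hy : ∃ i, y ∈ V i
      · rw [hFval x hx, hFval y hy] at hxy
        obtain ⟨hij, hab⟩ := hvaleq _ _ _ _ hxy
        rw [hij] at hab
        have hx' : x ∈ V (Nat.find hy) := hij ▸ Nat.find_spec hx
        rw [hGval _ _ hx', hGval _ _ (Nat.find_spec hy)] at hab
        obtain ⟨γ, hγ⟩ := (hgspec (Nat.find hy) ⟨x, hx'⟩ ⟨y, Nat.find_spec hy⟩).mp hab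
        exact ⟨γ, congrArg Subtype.val hγ⟩
      · rw [hFval x hx, hFvaln y hy] at hxy
        exact absurd hxy (hvalne _ _ _)
      · rw [hFvaln x hx, hFval y hy] at hxy
        exact absurd hxy.symm (hvalne _ _ _)
      · rw [hFvaln x hx, hFvaln y hy] at hxy
        have h1 : Real.arctan (emb (rep x)) = Real.arctan (emb (rep y)) := by linarith
        exact (hrep x y).mp (hembinj (Real.arctan_injective h1))
    · rintro ⟨γ, rfl⟩
      by_cases hx : ∃ i, x ∈ V i
      · have hy : ∃ i, α.smul γ x ∈ V i := ⟨Nat.find hx, hVinvF _ γ x (Nat.find_spec hx)⟩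
        rw [hFval x hx, hFval _ hy, ← hfind γ x hx hy]
        have hx' := Nat.find_spec hx
        have hy' : α.smul γ x ∈ V (Nat.find hx) := hVinvF _ γ x hx'
        have hGG : G (Nat.find hx) x = G (Nat.find hx) (α.smul γ x) := by
          rw [hGval _ _ hx', hGval _ _ hy']
          exact (hgspec (Nat.find hx) ⟨x, hx'⟩ ⟨α.smul γ x, hy'⟩).mpr ⟨γ, Subtype.ext rfl⟩
        rw [hGG]
      · have hy : ¬ ∃ i, α.smul γ x ∈ V i := fun hh =>
          hx ⟨hh.choose, (hVinv hh.choose γ x).mp hh.choose_spec⟩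
        rw [hFvaln x hx, hFvaln _ hy, (hrep x (α.smul γ x)).mpr ⟨γ, rfl⟩]
  -- Baire measurability of F
  have hFBM : BaireMFun F := by
    intro B hB
    apply (baireMSet_iff _).mpr
    have hZfind : ∀ i (x : α.X), x ∈ V i \ (⋃ j, ⋃ _ : j < i, V j) →
        ∀ (h : ∃ k, x ∈ V k), Nat.find h = i := by
      intro i x hx h
      refine (Nat.find_eq_iff h).mpr ⟨hx.1, fun m hm hmV => hx.2 ?_⟩
      exact mem_iUnion.mpr ⟨m, mem_iUnion.mpr ⟨hm, hmV⟩⟩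
    have hdecomp : F ⁻¹' B =
        (⋃ i, (V i \ (⋃ j, ⋃ _ : j < i, V j)) ∩
          (Subtype.val '' ((fun y : {x : α.X // x ∈ V i} =>
            2 * Real.pi * (i : ℕ) + Real.arctan (g i y)) ⁻¹' B)))
        ∪ ({x : α.X | ¬ ∃ i, x ∈ V i} ∩ F ⁻¹' B) := by
      apply Subset.antisymm
      · intro x hxB
        by_cases hx : ∃ i, x ∈ V i
        · have hZ : x ∈ V (Nat.find hx) \ (⋃ j, ⋃ _ : j < Nat.find hx, V j) := by
            refine ⟨Nat.find_spec hx, fun hmem => ?_⟩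
            obtain ⟨j, hj⟩ := mem_iUnion.mp hmem
            obtain ⟨hlt, hVj⟩ := mem_iUnion.mp hj
            exact Nat.find_min hx hlt hVj
          have hmem2 : x ∈ Subtype.val '' ((fun y : {z : α.X // z ∈ V (Nat.find hx)} =>
              2 * Real.pi * ((Nat.find hx : ℕ) : ℝ) + Real.arctan (g (Nat.find hx) y))
                ⁻¹' B) := by
            refine ⟨⟨x, Nat.find_spec hx⟩, ?_, rfl⟩
            show 2 * Real.pi * ((Nat.find hx : ℕ) : ℝ)
              + Real.arctan (g (Nat.find hx) ⟨x, Nat.find_spec hx⟩) ∈ B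
            rw [mem_preimage, hFval x hx, hGval _ _ (Nat.find_spec hx)] at hxB
            exact hxB
          exact mem_union_left _ (mem_iUnion.mpr ⟨Nat.find hx, hZ, hmem2⟩)
        · exact mem_union_right _ ⟨hx, hxB⟩
      · intro x hx
        rcases hx with hx | hx
        · obtain ⟨i, hxi⟩ := mem_iUnion.mp hx
          obtain ⟨hxZ, ⟨y, hyB, rfl⟩⟩ := hxi
          have hex : ∃ k, (y : α.X) ∈ V k := ⟨i, y.2⟩
          have hfi : Nat.find hex = i := hZfind i _ hxZ hex
          show F (y : α.X) ∈ B
          rw [hFval _ hex, hfi, hGval i _ y.2]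
          exact hyB
        · exact hx.2
    rw [hdecomp]
    apply BaireMeasurableSet.union
    · refine BaireMeasurableSet.iUnion fun i => BaireMeasurableSet.inter ?_ ?_
      · exact ((hVopen i).baireMeasurableSet).diff
          (BaireMeasurableSet.iUnion fun j => BaireMeasurableSet.iUnion fun _ =>
            (hVopen j).baireMeasurableSet)
      · apply baireMeasurableSet_image_val (hVopen i)
        have hmeas : Measurable (fun r : ℝ => 2 * Real.pi * (i : ℕ) + Real.arctan r) :=
          Real.continuous_arctan.measurable.const_add _
        exact (baireMSet_iff _).mp (hgBM i _ (hmeas hB))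
    · exact (hNm.inter).baireMeasurableSet
  show ∃ F : α.X → ℝ, BaireMFun F ∧ ∀ x y : α.X, F x = F y ↔ ∃ γ : Γ, α.smul γ x = y
  exact ⟨F, hFBM, hFiff⟩


end DescColor
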